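/- Let β: P → G be a surjective group homomorphism with P finitely generated and G finitely presented, and suppose β is 2-connected on R-homology (isomorphism on H_1(-;R), surjection on H_2(-;R)). Then the kernel N of β is an R-invisible subgroup of P: N is normally finitely generated in P and (N/[P,N]) ⊗_Z R = 0. -/

import Mathlib

open scoped TensorProduct

/-- The set of denominators of (reduced fractional expressions of) elements of `R ⊆ ℚ`. -/
def DR (R : Subring ℚ) : Set ℕ := {d | ∃ q ∈ R, q.den = d}

variable {G H A : Type*} [Group G] [Group H] [Group A]

/-- Evaluation of a monomial over `G` in `n` indeterminates at a tuple of elements of `G`. -/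
noncomputable def evalWord {n : ℕ} (g : Fin n → G) :
    Monoid.Coprod G (FreeGroup (Fin n)) →* G :=
  Monoid.Coprod.lift (MonoidHom.id G) (FreeGroup.lift g)

/-- The projection `G * F → F → F/[F,F]`. -/
noncomputable def toFreeAb (G : Type*) [Group G] (n : ℕ) :
    Monoid.Coprod G (FreeGroup (Fin n)) →* Abelianization (FreeGroup (Fin n)) :=
  Monoid.Coprod.lift 1 Abelianization.of

/-- An `R`-nullhomologous system of equations `xᵢ^e = wᵢ(x₁,…,xₙ)` over `G`. -/
structure NullSys (R : Subring ℚ) (G : Type*) [Group G] where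
  n : ℕ
  e : ℕ
  he : e ∈ DR R
  w : Fin n → Monoid.Coprod G (FreeGroup (Fin n))
  nullh : ∀ i, toFreeAb G n (w i) = 1

/-- A solution of a system of equations over `G`. -/
def NullSys.IsSolution {R : Subring ℚ} (S : NullSys R G) (g : Fin S.n → G) : Prop :=
  ∀ i, (g i) ^ S.e = evalWord g (S.w i)

/-- A group is `R`-closed if every `R`-nullhomologous system over it has a unique solution. -/
def IsRClosed (R : Subring ℚ) (A : Type*) [Group A] : Prop :=
  ∀ S : NullSys R A, ∃! g : Fin S.n → A, S.IsSolution g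

/-- A normal subgroup `N ≤ G` is `R`-invisible if it is normally finitely generated and every
element of `N/[G,N]` has (finite) order lying in `D_R`. -/
def IsRInvisible (R : Subring ℚ) {G : Type*} [Group G] (N : Subgroup G) : Prop :=
  N.Normal ∧
  (∃ s : Finset G, ↑s ⊆ (N : Set G) ∧ Subgroup.normalClosure ↑s = N) ∧
  ∀ x ∈ N, ∃ e ∈ DR R, x ^ e ∈ ⁅(⊤ : Subgroup G), N⁆
/-- `H₁(G;R) = H₁(G;ℤ) ⊗ R`, via the abelianization. -/
abbrev H1R (R : Subring ℚ) (G : Type*) [Group G] : Type _ :=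
  Additive (Abelianization G) ⊗[ℤ] R

/-- The map induced on `H₁(-;R)` by a group homomorphism. -/
noncomputable def H1Rmap (R : Subring ℚ) {G H : Type*} [Group G] [Group H] (φ : G →* H) :
    H1R R G →ₗ[ℤ] H1R R H :=
  TensorProduct.map (MonoidHom.toAdditive (Abelianization.map φ)).toIntLinearMap LinearMap.id

section Hopf

variable (G : Type*) [Group G]

/-- The canonical free presentation of `G`. -/
noncomputable def presHom : FreeGroup G →* G := FreeGroup.lift id

/-- The relation subgroup of the canonical free presentation of `G`. -/
noncomputable def relSub : Subgroup (FreeGroup G) := (presHom G).ker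

/-- The numerator `ker π ⊓ [F,F]` of the Hopf formula for `H₂(G)`. -/
noncomputable def hopfTop : Subgroup (FreeGroup G) :=
  relSub G ⊓ ⁅(⊤ : Subgroup (FreeGroup G)), (⊤ : Subgroup (FreeGroup G))⁆

/-- The denominator `[F, ker π]` of the Hopf formula for `H₂(G)`. -/
noncomputable def hopfBot : Subgroup (FreeGroup G) :=
  ⁅(⊤ : Subgroup (FreeGroup G)), relSub G⁆

noncomputable instance relSub_normal : (relSub G).Normal := MonoidHom.normal_ker _

noncomputable instance hopfBot_normal : (hopfBot G).Normal := Subgroup.commutator_normal _ _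

noncomputable instance hopfBot_subgroupOf_normal :
    ((hopfBot G).subgroupOf (hopfTop G)).Normal := Subgroup.normal_subgroupOf

/-- `H₂(G;ℤ)` via the Hopf formula `(ker π ⊓ [F,F])/[F, ker π]` for the canonical free
presentation `π : F(G) → G`. -/
abbrev H2Z : Type _ :=
  ↥(hopfTop G) ⧸ ((hopfBot G).subgroupOf (hopfTop G))

open scoped commutatorElement in
noncomputable instance H2ZCommGroup : CommGroup (H2Z G) :=
  { (inferInstance : Group (H2Z G)) with
    mul_comm := by
      intro a b
      induction a using QuotientGroup.induction_on with
      | H x =>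
      induction b using QuotientGroup.induction_on with
      | H y =>
      rw [← QuotientGroup.mk_mul, ← QuotientGroup.mk_mul, QuotientGroup.eq]
      rw [Subgroup.mem_subgroupOf]
      have : (((x * y)⁻¹ * (y * x) : ↥(hopfTop G)) : FreeGroup G)
          = ⁅((y : FreeGroup G))⁻¹, ((x : FreeGroup G))⁻¹⁆ := by
        simp [commutatorElement_def, mul_assoc]
      rw [this]
      exact Subgroup.commutator_mem_commutator (Subgroup.mem_top _)
        ((relSub G).inv_mem (Subgroup.mem_inf.mp x.2).1) }

variable {G} {H : Type*} [Group H]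

theorem presHom_naturality (φ : G →* H) (x : FreeGroup G) :
    presHom H (FreeGroup.map φ x) = φ (presHom G x) := by
  have : (presHom H).comp (FreeGroup.map φ) = φ.comp (presHom G) := by
    apply FreeGroup.ext_hom
    intro a
    simp [presHom]
  exact DFunLike.congr_fun this x

theorem map_mem_hopfTop (φ : G →* H) {x : FreeGroup G} (hx : x ∈ hopfTop G) :
    FreeGroup.map φ x ∈ hopfTop H := by
  rcases Subgroup.mem_inf.mp hx with ⟨h1, h2⟩
  refine Subgroup.mem_inf.mpr ⟨?_, ?_⟩
  · simp only [relSub, MonoidHom.mem_ker] at h1 ⊢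
    rw [presHom_naturality, h1, map_one]
  · have := Subgroup.mem_map_of_mem (FreeGroup.map φ) h2
    rw [Subgroup.map_commutator] at this
    exact Subgroup.commutator_mono le_top le_top this

theorem map_mem_hopfBot (φ : G →* H) {x : FreeGroup G} (hx : x ∈ hopfBot G) :
    FreeGroup.map φ x ∈ hopfBot H := by
  have := Subgroup.mem_map_of_mem (FreeGroup.map φ) hx
  rw [hopfBot, Subgroup.map_commutator] at this
  refine Subgroup.commutator_mono le_top ?_ this
  rintro y ⟨z, hz, rfl⟩
  simp only [relSub, MonoidHom.mem_ker] at hz ⊢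
  rw [presHom_naturality, hz, map_one]

/-- The map induced on `H₂(-;ℤ)` (Hopf formula) by a group homomorphism. -/
noncomputable def H2Zmap (φ : G →* H) : H2Z G →* H2Z H :=
  QuotientGroup.map _ _
    (MonoidHom.codRestrict ((FreeGroup.map φ).domRestrict (hopfTop G)) (hopfTop H)
      fun x => map_mem_hopfTop φ x.2)
    (by
      intro x hx
      rw [Subgroup.mem_subgroupOf] at hx
      rw [Subgroup.mem_comap, Subgroup.mem_subgroupOf]
      exact map_mem_hopfBot φ hx)

/-- The map induced on `H₂(-;R) = H₂(-;ℤ) ⊗ R` by a group homomorphism. -/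
noncomputable def H2Rmap (R : Subring ℚ) (φ : G →* H) :
    (Additive (H2Z G) ⊗[ℤ] R) →ₗ[ℤ] (Additive (H2Z H) ⊗[ℤ] R) :=
  TensorProduct.map (MonoidHom.toAdditive (H2Zmap φ)).toIntLinearMap LinearMap.id

end Hopf

/-- A homomorphism is 2-connected on `R`-homology if it induces an isomorphism on `H₁(-;R)`
and a surjection on `H₂(-;R)`. -/
def TwoConnected (R : Subring ℚ) {G H : Type*} [Group G] [Group H] (φ : G →* H) : Prop :=
  Function.Bijective (H1Rmap R φ) ∧ Function.Surjective (H2Rmap R φ)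

/-- A group is finitely presented if it is presented by finitely many generators and
relations. -/
def FinitelyPresentedGroup (G : Type*) [Group G] : Prop :=
  ∃ (n : ℕ) (rels : Finset (FreeGroup (Fin n))),
    Nonempty (G ≃* PresentedGroup (rels : Set (FreeGroup (Fin n))))

/-- The class `Ω^R`: homomorphisms of finitely generated groups into finitely presented groups
which are 2-connected on `R`-homology. -/
def MemOmega (R : Subring ℚ) {P G : Type*} [Group P] [Group G] (α : P →* G) : Prop :=
  Group.FG P ∧ FinitelyPresentedGroup G ∧ TwoConnected R α

/-- The quotient `N/[G,N]` of a normal subgroup `N ≤ G`. -/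
abbrev commQuot {G : Type*} [Group G] (N : Subgroup G) [N.Normal] : Type _ :=
  ↥N ⧸ ((⁅(⊤ : Subgroup G), N⁆).subgroupOf N)

open scoped commutatorElement in
noncomputable instance commQuotCommGroup {G : Type*} [Group G] (N : Subgroup G) [N.Normal] :
    CommGroup (commQuot N) :=
  { (inferInstance : Group (commQuot N)) with
    mul_comm := by
      intro a b
      induction a using QuotientGroup.induction_on with
      | H x =>
      induction b using QuotientGroup.induction_on with
      | H y =>
      rw [← QuotientGroup.mk_mul, ← QuotientGroup.mk_mul, QuotientGroup.eq]
      rw [Subgroup.mem_subgroupOf]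
      have : (((x * y)⁻¹ * (y * x) : ↥N) : G) = ⁅((y : G))⁻¹, ((x : G))⁻¹⁆ := by
        simp [commutatorElement_def, mul_assoc]
      rw [this]
      exact Subgroup.commutator_mem_commutator (Subgroup.mem_top _) (N.inv_mem x.2) }

open scoped commutatorElement

set_option maxHeartbeats 1000000
set_option synthInstance.maxHeartbeats 400000

section DRfacts
variable {R : Subring ℚ}

theorem inv_den_mem {q : ℚ} (hq : q ∈ R) : ((q.den : ℚ))⁻¹ ∈ R := by
  have hcop : IsCoprime (q.num) (q.den : ℤ) := by
    rw [Int.isCoprime_iff_gcd_eq_one]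
    exact q.reduced
  obtain ⟨u, v, huv⟩ := hcop
  have hd : ((q.den : ℚ)) ≠ 0 := by exact_mod_cast q.den_nz
  have hqd : q * (q.den : ℚ) = (q.num : ℚ) := by
    nth_rewrite 1 [← Rat.num_div_den q]
    exact div_mul_cancel₀ _ hd
  have key : ((q.den : ℚ))⁻¹ = (u : ℚ) * q + (v : ℚ) := by
    refine (eq_inv_of_mul_eq_one_left ?_).symm
    calc ((u : ℚ) * q + v) * q.den = (u : ℚ) * (q * q.den) + v * q.den := by ring
    _ = (u : ℚ) * q.num + v * q.den := by rw [hqd]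
    _ = ((u * q.num + v * q.den : ℤ) : ℚ) := by push_cast; ring
    _ = 1 := by rw [huv]; norm_num
  rw [key]
  exact add_mem (mul_mem (intCast_mem R u) hq) (intCast_mem R v)

theorem mem_DR_iff {e : ℕ} : e ∈ DR R ↔ e ≠ 0 ∧ ((e : ℚ))⁻¹ ∈ R := by
  constructor
  · rintro ⟨q, hq, rfl⟩
    exact ⟨q.den_nz, inv_den_mem hq⟩
  · rintro ⟨he, hinv⟩
    exact ⟨((e : ℚ))⁻¹, hinv, Rat.inv_natCast_den_of_pos (Nat.pos_of_ne_zero he)⟩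

theorem one_mem_DR : 1 ∈ DR R := mem_DR_iff.mpr ⟨one_ne_zero, by rw [Nat.cast_one, inv_one]; exact R.one_mem⟩

theorem mul_mem_DR {e f : ℕ} (he : e ∈ DR R) (hf : f ∈ DR R) : e * f ∈ DR R := by
  rw [mem_DR_iff] at *
  refine ⟨Nat.mul_ne_zero he.1 hf.1, ?_⟩
  push_cast
  rw [mul_inv]
  exact mul_mem he.2 hf.2
end DRfacts

section Loc
variable (R : Subring ℚ)

/-- The submonoid of `ℤ` of positive integers invertible in `R`. -/
def Tmon : Submonoid ℤ where
  carrier := {e : ℤ | 0 < e ∧ ((e : ℚ))⁻¹ ∈ R}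
  one_mem' := ⟨one_pos, by rw [Int.cast_one, inv_one]; exact R.one_mem⟩
  mul_mem' := by
    rintro a b ⟨ha, ha'⟩ ⟨hb, hb'⟩
    refine ⟨mul_pos ha hb, ?_⟩
    push_cast
    rw [mul_inv]
    exact mul_mem ha' hb'

theorem isLocalization_Tmon : IsLocalization (Tmon R) R where
  map_units := by
    rintro ⟨s, hs, hs'⟩
    refine isUnit_iff_exists_inv.mpr ⟨⟨((s:ℚ))⁻¹, hs'⟩, Subtype.ext ?_⟩
    have h1 : ((algebraMap ℤ R s : R) : ℚ) = (s : ℚ) := by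
      simp [algebraMap_int_eq]
    push_cast [h1]
    exact mul_inv_cancel₀ (by exact_mod_cast hs.ne')
  surj := by
    intro z
    refine ⟨((z:ℚ).num, ⟨((z:ℚ).den : ℤ), by exact_mod_cast (z:ℚ).pos, by push_cast; exact inv_den_mem z.2⟩), Subtype.ext ?_⟩
    push_cast
    nth_rewrite 1 [← Rat.num_div_den (z:ℚ)]
    exact div_mul_cancel₀ _ (by exact_mod_cast (z:ℚ).den_nz)
  exists_of_eq := by
    intro a b h
    refine ⟨1, ?_⟩
    have h1 : ∀ n : ℤ, ((algebraMap ℤ R n : R) : ℚ) = (n : ℚ) := fun n => by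
      simp [algebraMap_int_eq]
    have : ((a:ℚ)) = b := by
      rw [← h1 a, ← h1 b, h]
    simp [show a = b from by exact_mod_cast this]

theorem tmul_one_eq_zero {M : Type*} [AddCommGroup M] {m : M}
    (h : m ⊗ₜ[ℤ] (1 : R) = 0) : ∃ e ∈ DR R, (e : ℤ) • m = 0 := by
  haveI := isLocalization_Tmon R
  haveI : IsLocalizedModule (Tmon R) (TensorProduct.mk ℤ R M 1) :=
    (isLocalizedModule_iff_isBaseChange (Tmon R) R _).mpr (TensorProduct.isBaseChange ℤ M R)
  have h2 : (TensorProduct.mk ℤ R M 1) m = 0 := by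
    have := congrArg (TensorProduct.comm ℤ M R) h
    rwa [TensorProduct.comm_tmul, LinearEquiv.map_zero] at this
  obtain ⟨⟨s, hs, hs'⟩, hsm⟩ := (IsLocalizedModule.eq_zero_iff (Tmon R) _).mp h2
  have hcast : ((s.toNat : ℕ) : ℚ) = (s : ℚ) := by exact_mod_cast congrArg (fun z : ℤ => (z : ℚ)) (Int.toNat_of_nonneg hs.le)
  refine ⟨s.toNat, mem_DR_iff.mpr ⟨by omega, by rwa [hcast]⟩, ?_⟩
  rw [show ((s.toNat : ℕ) : ℤ) = s from Int.toNat_of_nonneg hs.le]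
  exact hsm

theorem subsingleton_tensor_of_torsion {M : Type*} [AddCommGroup M]
    (h : ∀ m : M, ∃ e ∈ DR R, (e : ℤ) • m = 0) : Subsingleton (M ⊗[ℤ] R) := by
  refine subsingleton_of_forall_eq 0 fun z => ?_
  induction z using TensorProduct.induction_on with
  | zero => rfl
  | tmul m r =>
    obtain ⟨e, he, hm⟩ := h m
    obtain ⟨hne, hinv⟩ := mem_DR_iff.mp he
    have hr' : ((r:ℚ)) * ((e:ℚ))⁻¹ ∈ R := mul_mem r.2 hinv
    have hkey : (e : ℤ) • (⟨(r:ℚ) * ((e:ℚ))⁻¹, hr'⟩ : R) = r := by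
      refine Subtype.ext ?_
      push_cast
      rw [zsmul_eq_mul]
      push_cast
      field_simp
    calc m ⊗ₜ[ℤ] r = m ⊗ₜ[ℤ] ((e : ℤ) • (⟨(r:ℚ) * ((e:ℚ))⁻¹, hr'⟩ : R)) := by rw [hkey]
    _ = ((e : ℤ) • m) ⊗ₜ[ℤ] (⟨(r:ℚ) * ((e:ℚ))⁻¹, hr'⟩ : R) := by
        rw [TensorProduct.tmul_smul, TensorProduct.smul_tmul']
    _ = 0 := by rw [hm, TensorProduct.zero_tmul]
  | add a b ha hb => rw [ha, hb, add_zero]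
end Loc


theorem ker_normally_fg_presented {P : Type*} [Group P] {n : ℕ}
    (rels : Finset (FreeGroup (Fin n)))
    (β : P →* PresentedGroup (rels : Set (FreeGroup (Fin n))))
    (hsurj : Function.Surjective β) (hfg : Group.FG P) :
    ∃ s : Finset P, ↑s ⊆ (β.ker : Set P) ∧ Subgroup.normalClosure ↑s = β.ker := by
  classical
  obtain ⟨S0, hS0, hfin⟩ := Group.fg_iff.mp hfg
  set S : Finset P := hfin.toFinset with hSdef
  have hS : Subgroup.closure (S : Set P) = ⊤ := by
    rwa [hfin.coe_toFinset]
  set q : Fin n → P := fun i => Classical.choose (hsurj (PresentedGroup.of i)) with hqdef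
  have hq : ∀ i, β (q i) = PresentedGroup.of i := fun i => Classical.choose_spec (hsurj _)
  set φ : FreeGroup (Fin n) →* P := FreeGroup.lift q with hφdef
  have hβφ : β.comp φ = PresentedGroup.mk (rels : Set (FreeGroup (Fin n))) := by
    apply FreeGroup.ext_hom
    intro i
    simp only [MonoidHom.comp_apply, hφdef, FreeGroup.lift_apply_of]
    exact hq i
  have hβφ' : ∀ u, β (φ u) = PresentedGroup.mk _ u := fun u => DFunLike.congr_fun hβφ u
  set w : P → FreeGroup (Fin n) :=
    fun p => Classical.choose (PresentedGroup.mk_surjective (rels : Set (FreeGroup (Fin n))) (β p)) with hwdef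
  have hw : ∀ p, PresentedGroup.mk _ (w p) = β p := fun p => Classical.choose_spec (PresentedGroup.mk_surjective (rels : Set (FreeGroup (Fin n))) (β p))
  set s : Finset P := (S.image fun p => p * (φ (w p))⁻¹) ∪ rels.image φ with hsdef
  have hsub : (s : Set P) ⊆ (β.ker : Set P) := by
    intro x hx
    simp only [hsdef, Finset.coe_union, Set.mem_union, Finset.coe_image, Set.mem_image,
      Finset.mem_coe] at hx
    rcases hx with ⟨p, _, rfl⟩ | ⟨r, hr, rfl⟩
    · have : β (p * (φ (w p))⁻¹) = 1 := by
        rw [map_mul, map_inv, hβφ', hw, mul_inv_cancel]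
      exact this
    · have : β (φ r) = 1 := by
        rw [hβφ']
        exact (QuotientGroup.eq_one_iff _).mpr (Subgroup.subset_normalClosure hr)
      exact this
  set N' : Subgroup P := Subgroup.normalClosure (s : Set P) with hN'def
  haveI : N'.Normal := Subgroup.normalClosure_normal
  set κ : P →* P ⧸ N' := QuotientGroup.mk' N' with hκdef
  have hκker : ∀ x : P, κ x = 1 ↔ x ∈ N' := fun x => QuotientGroup.eq_one_iff x
  set f : Fin n → P ⧸ N' := fun i => κ (q i) with hfdef
  have hliftf : FreeGroup.lift f = κ.comp φ := by
    apply FreeGroup.ext_hom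
    intro i
    simp [hfdef, hφdef]
  have hrels : ∀ r ∈ (rels : Set (FreeGroup (Fin n))), FreeGroup.lift f r = 1 := by
    intro r hr
    rw [hliftf]
    exact (hκker _).mpr (Subgroup.subset_normalClosure (by
      simp only [hsdef, Finset.coe_union, Set.mem_union, Finset.coe_image, Set.mem_image,
        Finset.mem_coe]
      exact Or.inr ⟨r, hr, rfl⟩))
  set ψ : PresentedGroup (rels : Set (FreeGroup (Fin n))) →* P ⧸ N' :=
    PresentedGroup.toGroup hrels with hψdef
  have hψmk : ψ.comp (PresentedGroup.mk _) = κ.comp φ := by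
    apply FreeGroup.ext_hom
    intro i
    simp only [MonoidHom.comp_apply]
    have h1 : ψ (PresentedGroup.mk _ (FreeGroup.of i)) = f i := PresentedGroup.toGroup.of hrels
    rw [h1]
    simp [hfdef, hφdef]
  have hcomp : ψ.comp β = κ := by
    apply MonoidHom.eq_of_eqOn_dense hS
    intro p hp
    simp only [MonoidHom.comp_apply]
    rw [← hw p]
    have h1 : ψ (PresentedGroup.mk _ (w p)) = κ (φ (w p)) := DFunLike.congr_fun hψmk (w p)
    rw [h1]
    have hgen : p * (φ (w p))⁻¹ ∈ N' := Subgroup.subset_normalClosure (by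
      simp only [hsdef, Finset.coe_union, Set.mem_union, Finset.coe_image, Set.mem_image,
        Finset.mem_coe]
      exact Or.inl ⟨p, hp, rfl⟩)
    have : κ (p * (φ (w p))⁻¹) = 1 := (hκker _).mpr hgen
    rw [map_mul, map_inv] at this
    have := mul_eq_one_iff_eq_inv.mp this
    rw [this]
    simp
  refine ⟨s, hsub, le_antisymm (Subgroup.normalClosure_le_normal hsub) ?_⟩
  intro x hx
  have : κ x = ψ (β x) := (DFunLike.congr_fun hcomp x).symm
  rw [MonoidHom.mem_ker.mp hx, map_one] at this
  exact (hκker x).mp this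

theorem ker_normally_fg {P G : Type*} [Group P] [Group G] (β : P →* G)
    (hsurj : Function.Surjective β) (hfg : Group.FG P) (hfp : FinitelyPresentedGroup G) :
    ∃ s : Finset P, ↑s ⊆ (β.ker : Set P) ∧ Subgroup.normalClosure ↑s = β.ker := by
  obtain ⟨n, rels, ⟨ε⟩⟩ := hfp
  have hker : (ε.toMonoidHom.comp β).ker = β.ker := by
    ext x
    simp [MonoidHom.mem_ker, map_eq_one_iff _ ε.injective]
  obtain ⟨s, hs1, hs2⟩ := ker_normally_fg_presented rels (ε.toMonoidHom.comp β)
    (ε.surjective.comp hsurj) hfg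
  exact ⟨s, by rw [← hker]; exact hs1, by rw [← hker]; exact hs2⟩

theorem lift_diff_mem {α G : Type*} [Group G] (π : FreeGroup α →* G)
    (u : FreeGroup α →* FreeGroup α) (hu : ∀ f, π (u f) = π f) :
    ∀ f ∈ ⁅(⊤ : Subgroup (FreeGroup α)), (⊤ : Subgroup (FreeGroup α))⁆,
      u f * f⁻¹ ∈ ⁅(⊤ : Subgroup (FreeGroup α)), π.ker⁆ := by
  classical
  set F := FreeGroup α
  set K : Subgroup F := ⁅(⊤ : Subgroup F), π.ker⁆ with hKdef
  haveI : K.Normal := Subgroup.commutator_normal _ _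
  set κ : F →* F ⧸ K := QuotientGroup.mk' K with hκdef
  have central : ∀ a ∈ π.ker, ∀ b : F, κ a * κ b = κ b * κ a := by
    intro a ha b
    rw [← map_mul, ← map_mul]
    rw [hκdef, QuotientGroup.mk'_eq_mk', ]
    refine ⟨⁅b⁻¹, a⁻¹⁆, Subgroup.commutator_mem_commutator (Subgroup.mem_top _) (π.ker.inv_mem ha), ?_⟩
    rw [commutatorElement_def]
    simp only [mul_assoc]
    erw [inv_inv, inv_inv, mul_inv_cancel_left, mul_inv_cancel_left]
  have smem : ∀ f : F, u f * f⁻¹ ∈ π.ker := by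
    intro f
    rw [MonoidHom.mem_ker, map_mul, map_inv, hu f, mul_inv_cancel]
  have hommul : ∀ f g : F, κ (u (f * g) * (f * g)⁻¹) = κ (u f * f⁻¹) * κ (u g * g⁻¹) := by
    intro f g
    have h1 : u (f * g) * (f * g)⁻¹ = u f * (u g * g⁻¹) * f⁻¹ := by
      erw [map_mul, mul_inv_rev]; simp only [mul_assoc]
    rw [h1]
    have h2 : κ (u f * (u g * g⁻¹) * f⁻¹) = κ (u f) * (κ (u g * g⁻¹) * κ f⁻¹) := by
      rw [← map_mul, ← map_mul, mul_assoc]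
    rw [h2, central _ (smem g) f⁻¹, ← mul_assoc, ← map_mul, ← map_mul]
  set Φ : F →* F ⧸ K := MonoidHom.mk' (fun f => κ (u f * f⁻¹)) hommul with hΦdef
  have hcomm : ⁅(⊤ : Subgroup F), (⊤ : Subgroup F)⁆ ≤ Φ.ker := by
    rw [Subgroup.commutator_le]
    intro g₁ _ g₂ _
    rw [MonoidHom.mem_ker, map_commutatorElement]
    have hc : Commute (Φ g₁) (Φ g₂) := central _ (smem g₁) _
    exact hc.commutator_eq
  intro f hf
  have : Φ f = 1 := hcomm hf
  exact (QuotientGroup.eq_one_iff _).mp this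

section MainAux

variable {P G : Type*} [Group P] [Group G]

theorem presHom_surjective (P : Type*) [Group P] : Function.Surjective (presHom P) :=
  fun p => ⟨FreeGroup.of p, by simp [presHom]⟩

theorem main_torsion_step (R : Subring ℚ) (β : P →* G)
    (hsurj : Function.Surjective β) (h2c : TwoConnected R β) :
    ∀ x ∈ β.ker, ∃ e ∈ DR R, x ^ e ∈ ⁅(⊤ : Subgroup P), β.ker⁆ := by
  classical
  obtain ⟨h1bij, h2surj⟩ := h2c
  intro x hx
  set F := FreeGroup P
  set N : Subgroup P := β.ker with hNdef
  set C : Subgroup P := ⁅(⊤ : Subgroup P), N⁆ with hCdef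
  haveI : C.Normal := Subgroup.commutator_normal _ _
  set ρ : F →* P := presHom P with hρdef
  have hρs : Function.Surjective ρ := presHom_surjective P
  set π : F →* G := β.comp ρ with hπdef
  have hπs : Function.Surjective π := hsurj.comp (by exact hρs)
  set τ : FreeGroup G →* F := FreeGroup.lift (fun g => Classical.choose (hπs g)) with hτdef
  have hτ : ∀ v : FreeGroup G, π (τ v) = presHom G v := by
    intro v
    have : π.comp τ = presHom G := by
      apply FreeGroup.ext_hom
      intro g
      simp only [MonoidHom.comp_apply, hτdef, FreeGroup.lift_apply_of]
      rw [Classical.choose_spec (hπs g)]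
      simp [presHom]
    exact DFunLike.congr_fun this v
  set u : F →* F := τ.comp (FreeGroup.map β) with hudef
  have hu : ∀ f : F, π (u f) = π f := by
    intro f
    have h1 : u f = τ (FreeGroup.map β f) := rfl
    rw [h1, hτ, presHom_naturality]
    rfl
  -- members of π.ker map into N, commutators map into C
  have hmapker : ∀ k : F, k ∈ π.ker → ρ k ∈ N := by
    intro k hk
    exact hk
  have hmapC : ∀ k : F, k ∈ ⁅(⊤ : Subgroup F), π.ker⁆ → ρ k ∈ C := by
    intro k hk
    have h1 : Subgroup.map ρ ⁅(⊤ : Subgroup F), π.ker⁆ ≤ C := by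
      rw [Subgroup.map_commutator]
      exact Subgroup.commutator_mono le_top (fun p hp => by
        obtain ⟨k', hk', rfl⟩ := hp
        exact hmapker k' hk')
    exact h1 (Subgroup.mem_map_of_mem ρ hk)
  -- Step 1 : use H1 injectivity
  have hH1 : H1Rmap R β ((Additive.ofMul (Abelianization.of x)) ⊗ₜ[ℤ] (1 : R)) = 0 := by
    rw [H1Rmap]; erw [TensorProduct.map_tmul]
    have : (MonoidHom.toAdditive (Abelianization.map β)).toIntLinearMap
        (Additive.ofMul (Abelianization.of x)) = Additive.ofMul (Abelianization.of (β x)) := by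
      simp [Abelianization.map_of]
    rw [this, MonoidHom.mem_ker.mp hx, map_one, ofMul_one]
    exact TensorProduct.zero_tmul _ _
  have hzero : (Additive.ofMul (Abelianization.of x)) ⊗ₜ[ℤ] (1 : R) = 0 := by
    apply h1bij.1
    rw [hH1, map_zero]
  obtain ⟨e₁, he₁, he₁x⟩ := tmul_one_eq_zero R hzero
  have hxe₁ : x ^ e₁ ∈ commutator P := by
    have h1 : Additive.ofMul ((Abelianization.of x) ^ ((e₁ : ℤ))) = 0 := by
      rw [ofMul_zpow]
      exact he₁x
    have h2 : (Abelianization.of x) ^ e₁ = 1 := by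
      have := ofMul_eq_zero.mp h1
      rwa [zpow_natCast] at this
    have h3 : Abelianization.of (x ^ e₁) = 1 := by rw [map_pow, h2]
    exact (QuotientGroup.eq_one_iff _).mp h3
  set y : P := x ^ e₁ with hydef
  have hyN : y ∈ N := pow_mem hx e₁
  -- Step 2 : lift y to the free group
  have hcomm : y ∈ Subgroup.map ρ ⁅(⊤ : Subgroup F), (⊤ : Subgroup F)⁆ := by
    rw [Subgroup.map_commutator]
    have htop : Subgroup.map ρ (⊤ : Subgroup F) = ⊤ := by
      rw [Subgroup.map_top_of_surjective _ hρs]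
    rw [htop]
    exact hxe₁
  obtain ⟨f, hfcomm, hfy⟩ := hcomm
  have hfS : f ∈ π.ker := by
    rw [MonoidHom.mem_ker, hπdef, MonoidHom.comp_apply, hfy]
    exact hyN
  -- the corresponding element of H2Z G
  have hg0top : FreeGroup.map β f ∈ hopfTop G := by
    refine Subgroup.mem_inf.mpr ⟨?_, ?_⟩
    · show FreeGroup.map β f ∈ (presHom G).ker
      rw [MonoidHom.mem_ker, presHom_naturality]
      rw [hfy]
      exact hyN
    · have := Subgroup.mem_map_of_mem (FreeGroup.map β) hfcomm
      rw [Subgroup.map_commutator] at this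
      exact Subgroup.commutator_mono le_top le_top this
  set t : Additive (H2Z G) ⊗[ℤ] R :=
    (Additive.ofMul ((QuotientGroup.mk (⟨FreeGroup.map β f, hg0top⟩ : hopfTop G)) : H2Z G)) ⊗ₜ[ℤ] (1 : R) with htdef
  obtain ⟨z, hz⟩ := h2surj t
  -- the map δ : H2Z G →* commQuot N
  have hdres : ∀ g : hopfTop G, ρ (τ (g : FreeGroup G)) ∈ N := by
    intro g
    apply hmapker
    rw [MonoidHom.mem_ker, hτ]
    exact (Subgroup.mem_inf.mp g.2).1
  set dmap : ↥(hopfTop G) →* ↥N :=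
    MonoidHom.codRestrict ((ρ.comp τ).comp (hopfTop G).subtype) N hdres with hdmapdef
  have hdcond : (hopfBot G).subgroupOf (hopfTop G) ≤
      Subgroup.comap dmap (C.subgroupOf N) := by
    intro g hg
    rw [Subgroup.mem_subgroupOf] at hg
    rw [Subgroup.mem_comap, Subgroup.mem_subgroupOf]
    show ρ (τ (g : FreeGroup G)) ∈ C
    apply hmapC
    have h1 : Subgroup.map τ (hopfBot G) ≤ ⁅(⊤ : Subgroup F), π.ker⁆ := by
      rw [hopfBot, Subgroup.map_commutator]
      refine Subgroup.commutator_mono le_top ?_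
      rintro k ⟨r, hr, rfl⟩
      rw [MonoidHom.mem_ker, hτ]
      exact hr
    exact h1 (Subgroup.mem_map_of_mem τ hg)
  set δ : H2Z G →* commQuot N :=
    QuotientGroup.map _ _ dmap hdcond with hδdef
  set Θ : (Additive (H2Z G) ⊗[ℤ] R) →ₗ[ℤ] (Additive (commQuot N) ⊗[ℤ] R) :=
    TensorProduct.map (MonoidHom.toAdditive δ).toIntLinearMap LinearMap.id with hΘdef
  -- two computations
  have hdiff : ∀ k : F, k ∈ ⁅(⊤ : Subgroup F), (⊤ : Subgroup F)⁆ →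
      ρ (u k) * (ρ k)⁻¹ ∈ C := by
    intro k hk
    have h1 := lift_diff_mem π u hu k hk
    have h2 := hmapC _ h1
    rwa [map_mul, map_inv] at h2
  have hclaimA : Θ t = (Additive.ofMul ((QuotientGroup.mk (⟨y, hyN⟩ : ↥N)) : commQuot N)) ⊗ₜ[ℤ] (1 : R) := by
    rw [htdef, hΘdef]; erw [TensorProduct.map_tmul]
    congr 1
    show Additive.ofMul (δ (QuotientGroup.mk (⟨FreeGroup.map β f, hg0top⟩ : hopfTop G)))
      = Additive.ofMul ((QuotientGroup.mk (⟨y, hyN⟩ : ↥N)) : commQuot N)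
    congr 1
    rw [hδdef, QuotientGroup.map_mk]
    rw [QuotientGroup.eq]
    rw [Subgroup.mem_subgroupOf]
    have hval : ((dmap ⟨FreeGroup.map β f, hg0top⟩ : ↥N) : P) = ρ (u f) := rfl
    show (((dmap ⟨FreeGroup.map β f, hg0top⟩)⁻¹ * ⟨y, hyN⟩ : ↥N) : P) ∈ C
    rw [Subgroup.coe_mul, Subgroup.coe_inv, hval]
    have hd : ρ (u f) * y⁻¹ ∈ C := by
      have := hdiff f hfcomm
      rwa [hfy] at this
    have : (ρ (u f))⁻¹ * y = y⁻¹ * (ρ (u f) * y⁻¹)⁻¹ * y := by group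
    rw [this]
    have hconj := Subgroup.Normal.conj_mem ‹C.Normal› _ (C.inv_mem hd) y⁻¹
    simpa using hconj
  have hclaimB : Θ (H2Rmap R β z) = 0 := by
    have hδtriv : ∀ m' : H2Z P, δ (H2Zmap β m') = 1 := by
      intro m'
      induction m' using QuotientGroup.induction_on with
      | H h =>
      rw [H2Zmap, QuotientGroup.map_mk, hδdef, QuotientGroup.map_mk]
      rw [QuotientGroup.eq_one_iff]
      rw [Subgroup.mem_subgroupOf]
      show ρ (τ (FreeGroup.map β (h : F))) ∈ C
      have hρh : ρ (h : F) = 1 := (Subgroup.mem_inf.mp h.2).1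
      have hhc : (h : F) ∈ ⁅(⊤ : Subgroup F), (⊤ : Subgroup F)⁆ := (Subgroup.mem_inf.mp h.2).2
      have h1 : ρ (u (h : F)) * (ρ (h : F))⁻¹ ∈ C := hdiff _ hhc
      rw [hρh] at h1
      simpa [hudef] using h1
    clear hz hclaimA
    induction z using TensorProduct.induction_on with
    | zero => simp
    | tmul m r =>
      erw [H2Rmap, TensorProduct.map_tmul]
      dsimp only
      have : (MonoidHom.toAdditive δ).toIntLinearMap
          ((MonoidHom.toAdditive (H2Zmap β)).toIntLinearMap m) = 0 := by
        show Additive.ofMul (δ (H2Zmap β m.toMul)) = 0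
        rw [hδtriv]
        rfl
      rw [LinearMap.id_apply, this, TensorProduct.zero_tmul]
    | add a b ha hb => rw [map_add, map_add, ha, hb, add_zero]
  have hfinal : (Additive.ofMul ((QuotientGroup.mk (⟨y, hyN⟩ : ↥N)) : commQuot N)) ⊗ₜ[ℤ] (1 : R) = 0 := by
    rw [← hclaimA, ← hz]
    exact hclaimB
  obtain ⟨e₂, he₂, he₂y⟩ := tmul_one_eq_zero R hfinal
  refine ⟨e₁ * e₂, mul_mem_DR he₁ he₂, ?_⟩
  have h1 : ((QuotientGroup.mk (⟨y, hyN⟩ : ↥N) : commQuot N)) ^ e₂ = 1 := by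
    have h2 : Additive.ofMul (((QuotientGroup.mk (⟨y, hyN⟩ : ↥N) : commQuot N)) ^ ((e₂ : ℤ))) = 0 := by
      rw [ofMul_zpow]
      exact he₂y
    have := ofMul_eq_zero.mp h2
    rwa [zpow_natCast] at this
  rw [← QuotientGroup.mk_pow, QuotientGroup.eq_one_iff, Subgroup.mem_subgroupOf] at h1
  have h3 : ((⟨y, hyN⟩ : ↥N) ^ e₂ : ↥N) = (⟨y ^ e₂, pow_mem hyN e₂⟩ : ↥N) := rfl
  rw [h3] at h1
  rw [pow_mul]
  exact h1

end MainAux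

/-- If `β : P → G` is a surjection of a finitely generated group onto a finitely presented
group which is 2-connected on `R`-homology, then `N = ker β` is `R`-invisible: it is normally
finitely generated and `(N/[P,N]) ⊗_ℤ R = 0`. -/
theorem ker_of_twoConnected_surjection_rInvisible (R : Subring ℚ)
    {P G : Type*} [Group P] [Group G] (β : P →* G)
    (hsurj : Function.Surjective β) (hfg : Group.FG P) (hfp : FinitelyPresentedGroup G)
    (h2c : TwoConnected R β) :
    (∃ s : Finset P, ↑s ⊆ (β.ker : Set P) ∧ Subgroup.normalClosure ↑s = β.ker) ∧
      Subsingleton (Additive (commQuot β.ker) ⊗[ℤ] R) := by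
  refine ⟨ker_normally_fg β hsurj hfg hfp, ?_⟩
  refine subsingleton_tensor_of_torsion R ?_
  intro m
  obtain ⟨c, rfl⟩ : ∃ c : commQuot β.ker, Additive.ofMul c = m := ⟨m.toMul, rfl⟩
  induction c using QuotientGroup.induction_on with
  | H a =>
  obtain ⟨e, he, hxe⟩ := main_torsion_step R β hsurj h2c (a : P) a.2
  refine ⟨e, he, ?_⟩
  rw [← ofMul_zpow, ofMul_eq_zero, zpow_natCast, ← QuotientGroup.mk_pow,
    QuotientGroup.eq_one_iff, Subgroup.mem_subgroupOf]
  have h1 : (a ^ e : ↥β.ker) = ⟨(a : P) ^ e, pow_mem a.2 e⟩ := rfl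
  rw [h1]
  exact hxe
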